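/- arXiv:math/0610829 — 2 statements merged into one kernel-verified Lean document; each statement's English description precedes it below -/
import Mathlib

section
/- For $d \geq 2$, a stacked $d$-sphere is uniquely determined by its edge graph: if $X$ and $Y$ are stacked $d$-spheres and there is a graph isomorphism between the edge graph of $X$ and the edge graph of $Y$, then $X$ and $Y$ are isomorphic as simplicial complexes. -/
open Finset

noncomputable section

attribute [local instance] Classical.propDecidable

variable {V : Type} [DecidableEq V]

/-- A (finite abstract) simplicial complex: a finite family of nonempty finite sets (faces)
closed under taking nonempty subsets. -/
def IsComplex (K : Finset (Finset V)) : Prop :=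
  (∀ s ∈ K, s.Nonempty) ∧ ∀ s ∈ K, ∀ t ⊆ s, t.Nonempty → t ∈ K

/-- The vertex set of a complex: the union of its faces. -/
def vertexSet (K : Finset (Finset V)) : Finset V := K.sup id

/-- A facet is a maximal face. -/
def IsFacet (K : Finset (Finset V)) (s : Finset V) : Prop :=
  s ∈ K ∧ ∀ t ∈ K, s ⊆ t → s = t

/-- A complex is pure of dimension `d` if it is nonempty and every facet has `d + 1` vertices. -/
def IsPure (K : Finset (Finset V)) (d : ℕ) : Prop :=
  K.Nonempty ∧ ∀ s, IsFacet K s → s.card = d + 1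

/-- The edge graph (1-skeleton) of a complex. -/
def edgeGraph (K : Finset (Finset V)) : SimpleGraph V where
  Adj x y := x ≠ y ∧ ({x, y} : Finset V) ∈ K
  symm := by
    constructor
    intro x y h
    refine ⟨h.1.symm, ?_⟩
    rw [Finset.pair_comm]
    exact h.2
  loopless := by
    constructor
    intro x h
    exact h.1 rfl

/-- A complex is connected if it has a vertex and any two of its vertices are joined by a
path in its edge graph. -/
def CConnected (K : Finset (Finset V)) : Prop :=
  (vertexSet K).Nonempty ∧
    ∀ u ∈ vertexSet K, ∀ v ∈ vertexSet K, (edgeGraph K).Reachable u v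

/-- The link of a face `α`: all faces `β` disjoint from `α` with `α ∪ β` a face. -/
def link (K : Finset (Finset V)) (α : Finset V) : Finset (Finset V) :=
  K.filter fun β => Disjoint α β ∧ α ∪ β ∈ K

/-- The number of edges (1-dimensional faces) of a complex. -/
def edgeCount (K : Finset (Finset V)) : ℕ := (K.filter fun s => s.card = 2).card

/-- A weak pseudomanifold of dimension `d`: a pure `d`-dimensional complex in which every
`(d-1)`-dimensional face lies in exactly two facets. -/
def IsWeakPM (K : Finset (Finset V)) (d : ℕ) : Prop :=
  IsComplex K ∧ IsPure K d ∧
    ∀ s ∈ K, s.card = d → (K.filter fun t => IsFacet K t ∧ s ⊆ t).card = 2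

/-- A normal `d`-pseudomanifold: a connected weak pseudomanifold of dimension `d` in which
the link of every face of dimension at most `d - 2` is connected. -/
def IsNormalPM (K : Finset (Finset V)) (d : ℕ) : Prop :=
  IsWeakPM K d ∧ CConnected K ∧
    ∀ s ∈ K, s.card ≤ d - 1 → CConnected (link K s)

/-- The standard `d`-sphere: the complex of all nonempty proper subsets of a `(d+2)`-set. -/
def IsStandardSphere (K : Finset (Finset V)) (d : ℕ) : Prop :=
  ∃ A : Finset V, A.card = d + 2 ∧ K = A.powerset.filter fun s => s.Nonempty ∧ s ≠ A

/-- `StarringOf X Y` : `Y` is obtained from `X` by starring a new vertex `v` in a facet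
`σ` of `X`, i.e. by replacing the facet `σ` with the cone with apex `v` over its boundary. -/
def StarringOf (X Y : Finset (Finset V)) : Prop :=
  ∃ (σ : Finset V) (v : V), IsFacet X σ ∧ v ∉ vertexSet X ∧
    Y = X.erase σ ∪ (σ.powerset.filter fun τ => τ ≠ σ).image fun τ => insert v τ

/-- A stacked `d`-sphere: a complex obtained from the standard `d`-sphere by a finite
sequence of starrings. -/
def IsStackedSphere (K : Finset (Finset V)) (d : ℕ) : Prop :=
  ∃ S : Finset (Finset V), IsStandardSphere S d ∧ Relation.ReflTransGen StarringOf S K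

/-- The induced subcomplex on a set `U` of vertices. -/
def induced (K : Finset (Finset V)) (U : Finset V) : Finset (Finset V) :=
  K.filter fun s => s ⊆ U

/-- The simplicial complement of the induced subcomplex on `U`: the induced subcomplex on
the complementary set of vertices. -/
def simpComplement (K : Finset (Finset V)) (U : Finset V) : Finset (Finset V) :=
  induced K (vertexSet K \ U)

/-- The degree of a vertex: the number of vertices of its link. -/
def vertDegree (K : Finset (Finset V)) (v : V) : ℕ := (vertexSet (link K {v})).card

/-- `farApart G x y` : the distance from `x` to `y` in the graph `G` is at least `3`
(where unreachable counts as infinite distance). -/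
def farApart (G : SimpleGraph V) (x y : V) : Prop :=
  x ≠ y ∧ ¬ G.Adj x y ∧ ∀ z : V, ¬ (G.Adj x z ∧ G.Adj z y)

/-- `Admissible X σ₁ σ₂ ψ` : `σ₁, σ₂` are disjoint facets of `X` and `ψ` restricts to a
bijection from `σ₁` onto `σ₂` moving every `x ∈ σ₁` to distance at least 3 from itself. -/
def Admissible (X : Finset (Finset V)) (σ₁ σ₂ : Finset V) (ψ : V → V) : Prop :=
  IsFacet X σ₁ ∧ IsFacet X σ₂ ∧ Disjoint σ₁ σ₂ ∧ Set.BijOn ψ ↑σ₁ ↑σ₂ ∧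
    ∀ x ∈ σ₁, farApart (edgeGraph X) x (ψ x)

/-- Elementary handle addition `X^ψ`: remove the two facets `σ₁, σ₂` and identify each
`x ∈ σ₁` with `ψ x ∈ σ₂`. -/
def handleAdd (X : Finset (Finset V)) (σ₁ σ₂ : Finset V) (ψ : V → V) :
    Finset (Finset V) :=
  ((X.erase σ₁).erase σ₂).image fun s => s.image fun x => if x ∈ σ₁ then ψ x else x

/-- Isomorphism of simplicial complexes: an injection on vertices carrying the faces of one
complex exactly onto the faces of the other. -/
def CplxIso {W : Type} [DecidableEq W] (K : Finset (Finset V)) (L : Finset (Finset W)) :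
    Prop :=
  ∃ f : V → W, Set.InjOn f ↑(vertexSet K) ∧ L = K.image fun s => s.image f

/-- The connected component of the complex `K` containing the vertex `v` (as a subcomplex). -/
def componentOf (K : Finset (Finset V)) (v : V) : Finset (Finset V) :=
  K.filter fun s => ∀ x ∈ s, (edgeGraph K).Reachable v x

/-- The edges of `M` having exactly one end in `A`. -/
def crossEdges (M : Finset (Finset V)) (A : Finset V) : Finset (Finset V) :=
  M.filter fun e => e.card = 2 ∧ (e ∩ A).card = 1

/-- The graph whose vertices are the edges of `M` with exactly one end in `A`, two of them
being adjacent when the union of the corresponding edges is a 2-dimensional face of `M`. -/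
def crossGraph (M : Finset (Finset V)) (A : Finset V) : SimpleGraph (Finset V) where
  Adj e f := e ≠ f ∧ e ∈ crossEdges M A ∧ f ∈ crossEdges M A ∧
    e ∪ f ∈ M ∧ (e ∪ f).card = 3
  symm := by
    constructor
    intro e f h
    obtain ⟨h1, h2, h3, h4, h5⟩ := h
    exact ⟨h1.symm, h3, h2, by rwa [Finset.union_comm], by rwa [Finset.union_comm]⟩
  loopless := by
    constructor
    intro e h
    exact h.1 rfl

/-- The class `𝒦(d)`: normal `d`-pseudomanifolds all of whose vertex links are stacked
`(d-1)`-spheres. -/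
def InClassK (K : Finset (Finset V)) (d : ℕ) : Prop :=
  IsNormalPM K d ∧ ∀ v ∈ vertexSet K, IsStackedSphere (link K {v}) (d - 1)

/-- The total number of partitions of `n`. -/
def numPartitions (n : ℕ) : ℕ := Fintype.card (Nat.Partition n)

/-- The number of even partitions of `n` (those with an even number of even parts). -/
def numEvenPartitions (n : ℕ) : ℕ :=
  Fintype.card {p : Nat.Partition n // Even (Multiset.card (p.parts.filter fun i => Even i))}

/-- The number of odd partitions of `n` (those with an odd number of even parts). -/
def numOddPartitions (n : ℕ) : ℕ :=
  Fintype.card {p : Nat.Partition n // Odd (Multiset.card (p.parts.filter fun i => Even i))}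

/-- The facets of `N^{d+1}_{m+d+1}` : the sets of `d+2` consecutive integers inside
`{1, …, m+d+1}`. -/
def NFacets (d m : ℕ) : Finset (Finset ℕ) :=
  (Finset.Icc 1 m).image fun k => Finset.Icc k (k + d + 1)

/-- The complex `N^{d+1}_{m+d+1}` on vertex set `{1, …, m+d+1}` whose facets are the sets
of `d+2` consecutive integers. -/
def Ncomplex (d m : ℕ) : Finset (Finset ℕ) :=
  ((NFacets d m).biUnion Finset.powerset).filter fun s => s.Nonempty

/-- The facets of the boundary complex `∂N^{d+1}_{m+d+1}` : the `(d+1)`-element subsets of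
`{1, …, m+d+1}` contained in exactly one facet of `N^{d+1}_{m+d+1}`. -/
def boundaryNFacets (d m : ℕ) : Finset (Finset ℕ) :=
  (Finset.Icc 1 (m + d + 1)).powerset.filter fun s =>
    s.card = d + 1 ∧ ((Finset.Icc 1 m).filter fun k => s ⊆ Finset.Icc k (k + d + 1)).card = 1

/-- The boundary complex `∂N^{d+1}_{m+d+1}`. -/
def boundaryN (d m : ℕ) : Finset (Finset ℕ) :=
  ((boundaryNFacets d m).biUnion Finset.powerset).filter fun s => s.Nonempty

-- ===== auxiliary development =====

/-- The standard sphere complex on vertex set `A` (matches `IsStandardSphere`). -/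
def stdS (A : Finset V) : Finset (Finset V) :=
  A.powerset.filter fun s => s.Nonempty ∧ s ≠ A

/-- The starring operation (matches `StarringOf`). -/
def starC (X : Finset (Finset V)) (σ : Finset V) (v : V) : Finset (Finset V) :=
  X.erase σ ∪ (σ.powerset.filter fun τ => τ ≠ σ).image fun τ => insert v τ

/-- Graph neighbourhood of a vertex in a complex. -/
def nbr (K : Finset (Finset V)) (v : V) : Finset V :=
  (vertexSet K).filter fun x => (edgeGraph K).Adj v x

lemma mem_stdS {A s : Finset V} : s ∈ stdS A ↔ s ⊆ A ∧ s.Nonempty ∧ s ≠ A := by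
  simp [stdS]

lemma subset_vertexSet {K : Finset (Finset V)} {s : Finset V} (hs : s ∈ K) :
    s ⊆ vertexSet K :=
  Finset.le_sup (f := id) hs

lemma mem_vertexSet_iff {K : Finset (Finset V)} {x : V} :
    x ∈ vertexSet K ↔ ∃ s ∈ K, x ∈ s := by
  simp [vertexSet, Finset.mem_sup]

lemma not_mem_face {K : Finset (Finset V)} {v : V} {s : Finset V}
    (hv : v ∉ vertexSet K) (hs : s ∈ K) : v ∉ s :=
  fun h => hv (subset_vertexSet hs h)

lemma vertexSet_stdS {A : Finset V} (hA : 2 ≤ A.card) : vertexSet (stdS A) = A := by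
  apply Finset.Subset.antisymm
  · intro x hx
    obtain ⟨s, hs, hxs⟩ := mem_vertexSet_iff.1 hx
    exact (mem_stdS.1 hs).1 hxs
  · intro a ha
    have h1 : ({a} : Finset V) ∈ stdS A := by
      refine mem_stdS.2 ⟨Finset.singleton_subset_iff.2 ha, ⟨a, Finset.mem_singleton_self a⟩, ?_⟩
      intro h
      rw [← h] at hA
      simp at hA
    exact subset_vertexSet h1 (Finset.mem_singleton_self a)

lemma mem_starC {X : Finset (Finset V)} {σ : Finset V} {v : V} {s : Finset V} :
    s ∈ starC X σ v ↔ (s ∈ X ∧ s ≠ σ) ∨ ∃ t, t ⊆ σ ∧ t ≠ σ ∧ s = insert v t := by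
  constructor
  · intro h
    rcases Finset.mem_union.1 h with h | h
    · exact Or.inl ⟨Finset.mem_of_mem_erase h, Finset.ne_of_mem_erase h⟩
    · obtain ⟨t, ht, rfl⟩ := Finset.mem_image.1 h
      have h2 := Finset.mem_filter.1 ht
      exact Or.inr ⟨t, Finset.mem_powerset.1 h2.1, h2.2, rfl⟩
  · rintro (⟨h1, h2⟩ | ⟨t, h1, h2, rfl⟩)
    · exact Finset.mem_union_left _ (Finset.mem_erase.2 ⟨h2, h1⟩)
    · exact Finset.mem_union_right _
        (Finset.mem_image.2 ⟨t, Finset.mem_filter.2 ⟨Finset.mem_powerset.2 h1, h2⟩, rfl⟩)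

lemma vertexSet_starC {X : Finset (Finset V)} {σ : Finset V} {v : V}
    (hσ : σ ⊆ vertexSet X) (h2 : 2 ≤ σ.card) :
    vertexSet (starC X σ v) = insert v (vertexSet X) := by
  have hσne : σ.Nonempty := Finset.card_pos.1 (by omega)
  apply Finset.Subset.antisymm
  · intro x hx
    obtain ⟨s, hs, hxs⟩ := mem_vertexSet_iff.1 hx
    rcases mem_starC.1 hs with ⟨h1, _⟩ | ⟨t, h1, _, rfl⟩
    · exact Finset.mem_insert_of_mem (subset_vertexSet h1 hxs)
    · rcases Finset.mem_insert.1 hxs with rfl | hxt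
      · exact Finset.mem_insert_self _ _
      · exact Finset.mem_insert_of_mem (hσ (h1 hxt))
  · intro x hx
    rcases Finset.mem_insert.1 hx with rfl | hx
    · refine mem_vertexSet_iff.2 ⟨insert x ∅, mem_starC.2 (Or.inr ⟨∅, Finset.empty_subset _, ?_, rfl⟩), by simp⟩
      exact fun h => hσne.ne_empty h.symm
    · obtain ⟨s, hs, hxs⟩ := mem_vertexSet_iff.1 hx
      by_cases hsσ : s = σ
      · subst hsσ
        refine mem_vertexSet_iff.2 ⟨insert v {x}, mem_starC.2 (Or.inr ⟨{x}, Finset.singleton_subset_iff.2 hxs, ?_, rfl⟩), by simp⟩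
        intro h
        rw [← h] at h2
        simp at h2
      · exact mem_vertexSet_iff.2 ⟨s, mem_starC.2 (Or.inl ⟨hs, hsσ⟩), hxs⟩

lemma mem_nbr {K : Finset (Finset V)} {v x : V} :
    x ∈ nbr K v ↔ (edgeGraph K).Adj v x := by
  rw [nbr, Finset.mem_filter, and_iff_right_iff_imp]
  intro h
  exact subset_vertexSet h.2 (by simp)

lemma adj_iff {K : Finset (Finset V)} {a b : V} :
    (edgeGraph K).Adj a b ↔ a ≠ b ∧ ({a, b} : Finset V) ∈ K := Iff.rfl

lemma nbr_subset {K : Finset (Finset V)} {v : V} : nbr K v ⊆ vertexSet K :=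
  Finset.filter_subset _ _

lemma pair_card_le {a b : V} : ({a, b} : Finset V).card ≤ 2 := by
  apply le_trans (Finset.card_insert_le a {b})
  simp

lemma edge_starC_old {X : Finset (Finset V)} {σ : Finset V} {u : V} (hσ : 3 ≤ σ.card)
    {a b : V} (hu : u ∉ ({a, b} : Finset V)) (huX : u ∉ vertexSet X) :
    ({a, b} : Finset V) ∈ starC X σ u ↔ ({a, b} : Finset V) ∈ X := by
  constructor
  · intro h
    rcases mem_starC.1 h with ⟨h1, _⟩ | ⟨t, _, _, h3⟩
    · exact h1
    · exact absurd (h3 ▸ Finset.mem_insert_self u t) hu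
  · intro h
    apply mem_starC.2
    refine Or.inl ⟨h, ?_⟩
    intro hEq
    have h2 := pair_card_le (a := a) (b := b)
    rw [hEq] at h2
    omega

lemma nbr_starC_new {X : Finset (Finset V)} {σ : Finset V} {u : V}
    (hσv : σ ⊆ vertexSet X) (h2 : 2 ≤ σ.card) (hu : u ∉ vertexSet X) :
    nbr (starC X σ u) u = σ := by
  ext x
  rw [mem_nbr, adj_iff]
  constructor
  · rintro ⟨hne, hmem⟩
    rcases mem_starC.1 hmem with ⟨h1, _⟩ | ⟨t, h1, _, h3⟩
    · exact absurd (subset_vertexSet h1 (Finset.mem_insert_self u {x})) hu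
    · have hx : x ∈ insert u t := by
        rw [← h3]
        simp
      rcases Finset.mem_insert.1 hx with rfl | hxt
      · exact absurd rfl hne
      · exact h1 hxt
  · intro hxσ
    have hne : u ≠ x := fun h => hu (hσv (h ▸ hxσ))
    refine ⟨hne, mem_starC.2 (Or.inr ⟨{x}, Finset.singleton_subset_iff.2 hxσ, ?_, rfl⟩)⟩
    intro h
    rw [← h] at h2
    simp at h2

lemma nbr_starC_notmem {X : Finset (Finset V)} {σ : Finset V} {u : V}
    (hσv : σ ⊆ vertexSet X) (h3 : 3 ≤ σ.card) (hu : u ∉ vertexSet X)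
    {w : V} (hw : w ∈ vertexSet X) (hwσ : w ∉ σ) :
    nbr (starC X σ u) w = nbr X w := by
  ext x
  rw [mem_nbr, mem_nbr, adj_iff, adj_iff]
  by_cases hxu : x = u
  · subst hxu
    constructor
    · rintro ⟨hne, hmem⟩
      exfalso
      rcases mem_starC.1 hmem with ⟨h1, _⟩ | ⟨t, h1, _, h3'⟩
      · exact hu (subset_vertexSet h1 (by simp))
      · have hwt : w ∈ insert x t := by
          rw [← h3']
          simp
        have hwx : w ≠ x := fun h => hu (h ▸ hw)
        rcases Finset.mem_insert.1 hwt with h | h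
        · exact hwx h
        · exact hwσ (h1 h)
    · rintro ⟨hne, hmem⟩
      exact absurd (subset_vertexSet hmem (by simp)) hu
  · have hu2 : u ∉ ({w, x} : Finset V) := by
      simp only [Finset.mem_insert, Finset.mem_singleton]
      rintro (rfl | rfl)
      · exact hu hw
      · exact hxu rfl
    rw [edge_starC_old h3 hu2 hu]

lemma nbr_starC_mem {X : Finset (Finset V)} {σ : Finset V} {u : V}
    (hσv : σ ⊆ vertexSet X) (h3 : 3 ≤ σ.card) (hu : u ∉ vertexSet X)
    {w : V} (hwσ : w ∈ σ) :
    nbr (starC X σ u) w = insert u (nbr X w) := by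
  have hw : w ∈ vertexSet X := hσv hwσ
  ext x
  by_cases hxu : x = u
  · subst hxu
    simp only [Finset.mem_insert_self, Finset.mem_insert, true_or, iff_true]
    rw [mem_nbr, adj_iff]
    refine ⟨fun h => hu (h ▸ hw), ?_⟩
    apply mem_starC.2
    refine Or.inr ⟨{w}, Finset.singleton_subset_iff.2 hwσ, ?_, ?_⟩
    · intro h
      rw [← h] at h3
      simp at h3
    · rw [Finset.pair_comm]
  · rw [mem_nbr, adj_iff, Finset.mem_insert]
    have hu2 : u ∉ ({w, x} : Finset V) := by
      simp only [Finset.mem_insert, Finset.mem_singleton]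
      rintro (rfl | rfl)
      · exact hu hw
      · exact hxu rfl
    rw [edge_starC_old h3 hu2 hu]
    simp only [hxu, false_or]
    rw [mem_nbr, adj_iff]


/-- Combined invariants of stacked spheres. -/
def GoodS (d : ℕ) (X : Finset (Finset V)) : Prop :=
  IsComplex X ∧ (∀ s ∈ X, s.card ≤ d + 1) ∧
    (∀ s ∈ X, ∃ t, t ∈ X ∧ s ⊆ t ∧ t.card = d + 1) ∧
    d + 2 ≤ (vertexSet X).card ∧ ∀ v ∈ vertexSet X, d + 1 ≤ (nbr X v).card

lemma facet_card {d : ℕ} {X : Finset (Finset V)} {σ : Finset V}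
    (hG : GoodS d X) (hσ : IsFacet X σ) : σ.card = d + 1 := by
  obtain ⟨t, ht, hsub, hcard⟩ := hG.2.2.1 σ hσ.1
  rw [hσ.2 t ht hsub]
  exact hcard

lemma nbr_stdS {A : Finset V} (h3 : 3 ≤ A.card) {v : V} (hv : v ∈ A) :
    nbr (stdS A) v = A.erase v := by
  ext x
  rw [mem_nbr, adj_iff]
  constructor
  · rintro ⟨hne, hmem⟩
    have h := mem_stdS.1 hmem
    exact Finset.mem_erase.2 ⟨fun hh => hne hh.symm, h.1 (by simp)⟩
  · intro hx
    have hx1 := Finset.mem_erase.1 hx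
    refine ⟨fun h => hx1.1 h.symm, mem_stdS.2 ⟨?_, ⟨v, by simp⟩, ?_⟩⟩
    · exact Finset.insert_subset hv (Finset.singleton_subset_iff.2 hx1.2)
    · intro h
      have h2 := pair_card_le (a := v) (b := x)
      rw [h] at h2
      omega

lemma good_standard {d : ℕ} (hd : 2 ≤ d) {A : Finset V} (hA : A.card = d + 2) :
    GoodS d (stdS A) := by
  have hcard : ∀ s ∈ stdS A, s.card ≤ d + 1 := by
    intro s hs
    have h := mem_stdS.1 hs
    have h2 : s ⊂ A := ⟨h.1, fun hsub => h.2.2 (Finset.Subset.antisymm h.1 hsub)⟩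
    have := Finset.card_lt_card h2
    omega
  refine ⟨⟨?_, ?_⟩, hcard, ?_, ?_, ?_⟩
  · intro s hs
    exact (mem_stdS.1 hs).2.1
  · intro s hs t hts htne
    have h := mem_stdS.1 hs
    refine mem_stdS.2 ⟨hts.trans h.1, htne, fun hEq => h.2.2 (Finset.Subset.antisymm h.1 (hEq ▸ hts))⟩
  · intro s hs
    have h := mem_stdS.1 hs
    obtain ⟨t, hst, htA, htc⟩ :=
      Finset.exists_subsuperset_card_eq h.1 (hcard s hs) (by omega)
    refine ⟨t, mem_stdS.2 ⟨htA, Finset.card_pos.1 (by omega), ?_⟩, hst, htc⟩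
    intro h'
    rw [h', hA] at htc
    omega
  · rw [vertexSet_stdS (by omega), hA]
  · intro v hv
    rw [vertexSet_stdS (by omega)] at hv
    rw [nbr_stdS (by omega) hv, Finset.card_erase_of_mem hv, hA]
    omega

lemma good_star {d : ℕ} (hd : 2 ≤ d) {X : Finset (Finset V)} {σ : Finset V} {v : V}
    (hG : GoodS d X) (hσ : IsFacet X σ) (hv : v ∉ vertexSet X) :
    GoodS d (starC X σ v) := by
  obtain ⟨hC, hcard, hfac, hvs, hdeg⟩ := hG
  have hσX := hσ.1
  have hσc : σ.card = d + 1 := facet_card ⟨hC, hcard, hfac, hvs, hdeg⟩ hσ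
  have hσsub : σ ⊆ vertexSet X := subset_vertexSet hσX
  have hVeq : vertexSet (starC X σ v) = insert v (vertexSet X) :=
    vertexSet_starC hσsub (by omega)
  have hstep : ∀ t₀ : Finset V, t₀ ⊆ σ → t₀ ≠ σ →
      ∃ t, t ∈ starC X σ v ∧ insert v t₀ ⊆ t ∧ t.card = d + 1 := by
    intro t₀ h1 h2
    have hlt : t₀.card < σ.card := Finset.card_lt_card (h1.ssubset_of_ne h2)
    obtain ⟨s', h1', h2', h3'⟩ :=
      Finset.exists_subsuperset_card_eq h1 (by omega : t₀.card ≤ d) (by omega : d ≤ σ.card)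
    have hs'ne : s' ≠ σ := by
      intro h
      rw [h] at h3'
      omega
    have hvins : v ∉ s' := fun h => hv (hσsub (h2' h))
    refine ⟨insert v s', mem_starC.2 (Or.inr ⟨s', h2', hs'ne, rfl⟩),
      Finset.insert_subset_insert v h1', ?_⟩
    rw [Finset.card_insert_of_notMem hvins, h3']
  refine ⟨⟨?_, ?_⟩, ?_, ?_, ?_, ?_⟩
  · intro s hs
    rcases mem_starC.1 hs with ⟨h1, _⟩ | ⟨t, _, _, rfl⟩
    · exact hC.1 s h1
    · exact Finset.insert_nonempty _ _
  · intro s hs t hts htne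
    rcases mem_starC.1 hs with ⟨h1, h2⟩ | ⟨t₀, h1, h2, rfl⟩
    · apply mem_starC.2
      refine Or.inl ⟨hC.2 s h1 t hts htne, fun hEq => h2 (hσ.2 s h1 (hEq ▸ hts)).symm⟩
    · by_cases hvt : v ∈ t
      · apply mem_starC.2
        right
        have hsub : t.erase v ⊆ t₀ := by
          intro x hx
          have hx1 := Finset.mem_erase.1 hx
          rcases Finset.mem_insert.1 (hts hx1.2) with h | h
          · exact absurd h hx1.1
          · exact h
        have hlt : (t.erase v).card < σ.card :=
          lt_of_le_of_lt (Finset.card_le_card hsub)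
            (Finset.card_lt_card (h1.ssubset_of_ne h2))
        refine ⟨t.erase v, hsub.trans h1, ?_, (Finset.insert_erase hvt).symm⟩
        intro hEq
        rw [hEq] at hlt
        omega
      · apply mem_starC.2
        left
        have htt₀ : t ⊆ t₀ := by
          intro x hx
          rcases Finset.mem_insert.1 (hts hx) with h | h
          · exact absurd (h ▸ hx) hvt
          · exact h
        refine ⟨hC.2 σ hσX t (htt₀.trans h1) htne, ?_⟩
        intro hEq
        exact h2 (Finset.Subset.antisymm h1 (hEq ▸ htt₀))
  · intro s hs
    rcases mem_starC.1 hs with ⟨h1, _⟩ | ⟨t, h1, h2, rfl⟩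
    · exact hcard s h1
    · have h3 : t.card < σ.card := Finset.card_lt_card (h1.ssubset_of_ne h2)
      have h4 := Finset.card_insert_le v t
      omega
  · intro s hs
    rcases mem_starC.1 hs with ⟨h1, h2⟩ | ⟨t₀, h1, h2, rfl⟩
    · obtain ⟨t, ht, hst, htc⟩ := hfac s h1
      by_cases htσ : t = σ
      · subst htσ
        obtain ⟨t', ht', hsub', hc'⟩ := hstep s hst h2
        exact ⟨t', ht', (Finset.subset_insert v s).trans hsub', hc'⟩
      · exact ⟨t, mem_starC.2 (Or.inl ⟨ht, htσ⟩), hst, htc⟩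
    · obtain ⟨t, ht, hsub, hc⟩ := hstep t₀ h1 h2
      exact ⟨t, ht, hsub, hc⟩
  · rw [hVeq, Finset.card_insert_of_notMem hv]
    omega
  · intro w hw
    rw [hVeq] at hw
    rcases Finset.mem_insert.1 hw with rfl | hw
    · rw [nbr_starC_new hσsub (by omega) hv, hσc]
    · by_cases hwσ : w ∈ σ
      · rw [nbr_starC_mem hσsub (by omega) hv hwσ]
        have h1 := hdeg w hw
        have h2 := Finset.card_le_card (Finset.subset_insert v (nbr X w))
        omega
      · rw [nbr_starC_notmem hσsub (by omega) hv hw hwσ]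
        exact hdeg w hw

lemma good_of_stacked {d : ℕ} (hd : 2 ≤ d) {X : Finset (Finset V)}
    (hX : IsStackedSphere X d) : GoodS d X := by
  obtain ⟨S, hS, hrt⟩ := hX
  induction hrt with
  | refl =>
    obtain ⟨A, hA, hSA⟩ := hS
    have hSA' : S = stdS A := hSA
    subst hSA'
    exact good_standard hd hA
  | @tail b c hab hbc ih =>
    obtain ⟨σ, v, hσ, hv, hXeq⟩ := hbc
    have hXeq' : c = starC b σ v := hXeq
    subst hXeq'
    exact good_star hd ih hσ hv

lemma std_of_small {d : ℕ} (hd : 2 ≤ d) {X : Finset (Finset V)}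
    (hX : IsStackedSphere X d) (hcard : (vertexSet X).card = d + 2) :
    IsStandardSphere X d := by
  obtain ⟨S, hS, hrt⟩ := hX
  rcases hrt.cases_tail with rfl | ⟨c, hc, hstep⟩
  · exact hS
  · exfalso
    obtain ⟨σ, v, hσ, hv, hXeq⟩ := hstep
    have hXeq' : X = starC c σ v := hXeq
    subst hXeq'
    have hG := good_of_stacked hd ⟨S, hS, hc⟩
    have hσc := facet_card hG hσ
    have h1 : vertexSet (starC c σ v) = insert v (vertexSet c) :=
      vertexSet_starC (subset_vertexSet hσ.1) (by omega)
    rw [h1, Finset.card_insert_of_notMem hv] at hcard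
    have := hG.2.2.2.1
    omega


lemma star_comm {X : Finset (Finset V)} {σ τ : Finset V} {u v : V}
    (hvτ : v ∉ τ) (huσ : u ∉ σ) :
    starC (starC X σ v) τ u = starC (starC X τ u) σ v := by
  have h1 : ((σ.powerset.filter fun t => t ≠ σ).image fun t => insert v t).erase τ
      = (σ.powerset.filter fun t => t ≠ σ).image fun t => insert v t := by
    apply Finset.erase_eq_of_notMem
    intro h
    obtain ⟨t, _, hEq⟩ := Finset.mem_image.1 h
    exact hvτ (hEq ▸ Finset.mem_insert_self v t)
  have h2 : ((τ.powerset.filter fun t => t ≠ τ).image fun t => insert u t).erase σ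
      = (τ.powerset.filter fun t => t ≠ τ).image fun t => insert u t := by
    apply Finset.erase_eq_of_notMem
    intro h
    obtain ⟨t, _, hEq⟩ := Finset.mem_image.1 h
    exact huσ (hEq ▸ Finset.mem_insert_self u t)
  show ((X.erase σ ∪ _).erase τ) ∪ _ = ((X.erase τ ∪ _).erase σ) ∪ _
  rw [Finset.erase_union_distrib, Finset.erase_union_distrib, h1, h2,
    Finset.erase_right_comm, Finset.union_assoc, Finset.union_assoc,
    Finset.union_comm ((τ.powerset.filter fun t => t ≠ τ).image fun t => insert u t)]

lemma mem_starC_std {τ : Finset V} {a b : V} (ha : a ∉ τ) (hb : b ∉ τ) (hab : a ≠ b)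
    (s : Finset V) :
    s ∈ starC (stdS (insert a τ)) τ b ↔
      ((s.Nonempty ∧ s ⊆ τ ∧ s ≠ τ ∧ a ∉ s ∧ b ∉ s) ∨
       (a ∈ s ∧ b ∉ s ∧ s.erase a ⊆ τ ∧ s.erase a ≠ τ) ∨
       (b ∈ s ∧ a ∉ s ∧ s.erase b ⊆ τ ∧ s.erase b ≠ τ)) := by
  rw [mem_starC]
  constructor
  · rintro (⟨h1, h2⟩ | ⟨t, h1, h2, rfl⟩)
    · obtain ⟨hsub, hne, hneA⟩ := mem_stdS.1 h1
      by_cases has : a ∈ s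
      · right; left
        have hbs : b ∉ s := by
          intro h
          rcases Finset.mem_insert.1 (hsub h) with h' | h'
          · exact hab h'.symm
          · exact hb h'
        refine ⟨has, hbs, ?_, ?_⟩
        · intro x hx
          have hx1 := Finset.mem_erase.1 hx
          rcases Finset.mem_insert.1 (hsub hx1.2) with h' | h'
          · exact absurd h' hx1.1
          · exact h'
        · intro hEq
          apply hneA
          rw [← Finset.insert_erase has, hEq]
      · left
        have hsubτ : s ⊆ τ := by
          intro x hx
          rcases Finset.mem_insert.1 (hsub hx) with h' | h'
          · exact absurd (h' ▸ hx) has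
          · exact h'
        exact ⟨hne, hsubτ, h2, has, fun h => hb (hsubτ h)⟩
    · right; right
      have hbt : b ∉ t := fun h => hb (h1 h)
      have hat : a ∉ t := fun h => ha (h1 h)
      refine ⟨Finset.mem_insert_self _ _, ?_, ?_, ?_⟩
      · intro h
        rcases Finset.mem_insert.1 h with h' | h'
        · exact hab h'
        · exact hat h'
      · rw [Finset.erase_insert hbt]
        exact h1
      · rw [Finset.erase_insert hbt]
        exact h2
  · rintro (⟨h1, h2, h3, h4, h5⟩ | ⟨h1, h2, h3, h4⟩ | ⟨h1, h2, h3, h4⟩)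
    · left
      refine ⟨mem_stdS.2 ⟨h2.trans (Finset.subset_insert _ _), h1, ?_⟩, h3⟩
      intro hEq
      apply h4
      rw [hEq]
      exact Finset.mem_insert_self _ _
    · left
      have hsub : s ⊆ insert a τ := by
        intro x hx
        by_cases hxa : x = a
        · exact hxa ▸ Finset.mem_insert_self _ _
        · exact Finset.mem_insert_of_mem (h3 (Finset.mem_erase.2 ⟨hxa, hx⟩))
      refine ⟨mem_stdS.2 ⟨hsub, ⟨a, h1⟩, ?_⟩, fun hEq => ha (hEq ▸ h1)⟩
      intro hEq
      apply h4
      rw [hEq]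
      exact Finset.erase_insert ha
    · right
      exact ⟨s.erase b, h3, h4, (Finset.insert_erase h1).symm⟩

lemma bipyramid {τ : Finset V} {u v : V} (huv : u ≠ v) (hu : u ∉ τ) (hv : v ∉ τ) :
    starC (stdS (insert v τ)) τ u = starC (stdS (insert u τ)) τ v := by
  ext s
  rw [mem_starC_std hv hu (Ne.symm huv) s, mem_starC_std hu hv huv s]
  tauto

lemma unstar {d : ℕ} (hd : 2 ≤ d) {S X : Finset (Finset V)} (hS : IsStandardSphere S d)
    (hrt : Relation.ReflTransGen StarringOf S X) :
    ∀ v : V, v ∈ vertexSet X → (nbr X v).card = d + 1 → d + 2 < (vertexSet X).card →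
    ∃ X', IsStackedSphere X' d ∧ nbr X v ∈ X' ∧ v ∉ vertexSet X' ∧
      X = starC X' (nbr X v) v := by
  induction hrt with
  | refl =>
    intro v hv hdeg hbig
    exfalso
    obtain ⟨A, hA, hSA⟩ := hS
    have hSA' : S = stdS A := hSA
    subst hSA'
    rw [vertexSet_stdS (by omega), hA] at hbig
    omega
  | @tail b c hab hbc ih =>
    obtain ⟨τ, u, hτf, hu, hXeq⟩ := hbc
    have hXeq' : c = starC b τ u := hXeq
    subst hXeq'
    clear hXeq
    have hX₀st : IsStackedSphere b d := ⟨S, hS, hab⟩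
    have hG := good_of_stacked hd hX₀st
    have hτc : τ.card = d + 1 := facet_card hG hτf
    have hτsub : τ ⊆ vertexSet b := subset_vertexSet hτf.1
    have hvs : vertexSet (starC b τ u) = insert u (vertexSet b) :=
      vertexSet_starC hτsub (by omega)
    intro v hv hdeg hbig
    by_cases hvu : v = u
    · subst hvu
      have hnbr : nbr (starC b τ v) v = τ := nbr_starC_new hτsub (by omega) hu
      rw [hnbr]
      exact ⟨b, hX₀st, hτf.1, hu, rfl⟩
    · have hvb : v ∈ vertexSet b := by
        rw [hvs] at hv
        rcases Finset.mem_insert.1 hv with h | h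
        · exact absurd h hvu
        · exact h
      by_cases hvτ : v ∈ τ
      · exfalso
        have h1 : nbr (starC b τ u) v = insert u (nbr b v) :=
          nbr_starC_mem hτsub (by omega) hu hvτ
        rw [h1, Finset.card_insert_of_notMem (fun h => hu (nbr_subset h))] at hdeg
        have := hG.2.2.2.2 v hvb
        omega
      · have hnbr : nbr (starC b τ u) v = nbr b v :=
          nbr_starC_notmem hτsub (by omega) hu hvb hvτ
        rw [hnbr] at hdeg ⊢
        by_cases hsmall : (vertexSet b).card = d + 2
        · obtain ⟨A, hA, hbA⟩ := std_of_small hd hX₀st hsmall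
          have hbA' : b = stdS A := hbA
          subst hbA'
          clear hbA
          have hvA : v ∈ A := by rwa [vertexSet_stdS (by omega)] at hvb
          have huA : u ∉ A := by rwa [vertexSet_stdS (by omega)] at hu
          have hτA : τ ⊆ A := fun x hx => (mem_stdS.1 hτf.1).1 hx
          have huτ : u ∉ τ := fun h => huA (hτA h)
          have hτv : τ = A.erase v := by
            apply Finset.eq_of_subset_of_card_le
            · intro x hx
              exact Finset.mem_erase.2 ⟨fun h => hvτ (h ▸ hx), hτA hx⟩
            · rw [Finset.card_erase_of_mem hvA, hA, hτc]
              omega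
          have hAvτ : A = insert v τ := by rw [hτv, Finset.insert_erase hvA]
          have hnbrA : nbr (stdS A) v = τ := by
            rw [nbr_stdS (by omega) hvA, ← hτv]
          rw [hnbrA]
          refine ⟨stdS (insert u τ), ⟨stdS (insert u τ), ⟨insert u τ, ?_, rfl⟩,
            Relation.ReflTransGen.refl⟩, ?_, ?_, ?_⟩
          · rw [Finset.card_insert_of_notMem huτ, hτc]
          · refine mem_stdS.2 ⟨Finset.subset_insert _ _, Finset.card_pos.1 (by omega), ?_⟩
            intro h
            exact huτ (h ▸ Finset.mem_insert_self u τ)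
          · rw [vertexSet_stdS (by rw [Finset.card_insert_of_notMem huτ]; omega)]
            intro h
            rcases Finset.mem_insert.1 h with h' | h'
            · exact hvu h'
            · exact hvτ h'
          · rw [hAvτ]
            exact bipyramid (Ne.symm hvu) huτ hvτ
        · have hbig₀ : d + 2 < (vertexSet b).card := by
            have := hG.2.2.2.1
            omega
          set σ' := nbr b v with hσ'def
          obtain ⟨X₁, hX₁st, hσX₁, hvX₁, hbeq⟩ := ih v hvb hdeg hbig₀
          have G₁ := good_of_stacked hd hX₁st
          have hσsub₀ : σ' ⊆ vertexSet b := nbr_subset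
          have hvσ : v ∉ σ' := fun h => (mem_nbr.1 h).1 rfl
          have hσnotb : σ' ∉ b := by
            intro h
            rw [hbeq] at h
            rcases mem_starC.1 h with ⟨_, h2⟩ | ⟨t, _, _, h3⟩
            · exact h2 rfl
            · exact hvσ (h3 ▸ Finset.mem_insert_self v t)
          have hστ : σ' ≠ τ := fun h => hσnotb (h ▸ hτf.1)
          have hτX₁ : τ ∈ X₁ := by
            have hh : τ ∈ starC X₁ (σ') v := hbeq ▸ hτf.1
            rcases mem_starC.1 hh with ⟨h1, _⟩ | ⟨t, _, _, h3⟩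
            · exact h1
            · exact absurd (h3 ▸ Finset.mem_insert_self v t) hvτ
          have hτfX₁ : IsFacet X₁ τ := by
            refine ⟨hτX₁, fun t ht hsub => Finset.eq_of_subset_of_card_le hsub ?_⟩
            rw [hτc]
            exact G₁.2.1 t ht
          have hσsubX₁ : σ' ⊆ vertexSet X₁ := subset_vertexSet hσX₁
          have hσc : (σ').card = d + 1 := hdeg
          have hvsb : vertexSet b = insert v (vertexSet X₁) := by
            rw [hbeq]
            exact vertexSet_starC hσsubX₁ (by rw [hσc]; omega)
          have huX₁ : u ∉ vertexSet X₁ := by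
            intro h
            apply hu
            rw [hvsb]
            exact Finset.mem_insert_of_mem h
          have huσ : u ∉ σ' := fun h => hu (hσsub₀ h)
          refine ⟨starC X₁ τ u, ?_, ?_, ?_, ?_⟩
          · obtain ⟨S₁, hS₁, hrt₁⟩ := hX₁st
            exact ⟨S₁, hS₁, hrt₁.tail ⟨τ, u, hτfX₁, huX₁, rfl⟩⟩
          · exact mem_starC.2 (Or.inl ⟨hσX₁, hστ⟩)
          · rw [vertexSet_starC (subset_vertexSet hτX₁) (by omega)]
            intro h
            rcases Finset.mem_insert.1 h with h' | h'
            · exact hvu h'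
            · exact hvX₁ h'
          · rw [hbeq]
            exact star_comm hvτ huσ


lemma image_sub_of_sub {W : Type} [DecidableEq W] {f : V → W} {U s t : Finset V}
    (hf : Set.InjOn f ↑U) (hs : s ⊆ U) (ht : t ⊆ U) (h : s.image f ⊆ t.image f) :
    s ⊆ t := by
  intro a ha
  have h1 : f a ∈ t.image f := h (Finset.mem_image_of_mem f ha)
  obtain ⟨b, hb, hba⟩ := Finset.mem_image.1 h1
  have : b = a := hf (Finset.mem_coe.2 (ht hb)) (Finset.mem_coe.2 (hs ha)) hba
  exact this ▸ hb

lemma image_inj_sub {W : Type} [DecidableEq W] {f : V → W} {U s t : Finset V}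
    (hf : Set.InjOn f ↑U) (hs : s ⊆ U) (ht : t ⊆ U) (h : s.image f = t.image f) :
    s = t :=
  Finset.Subset.antisymm (image_sub_of_sub hf hs ht h.le)
    (image_sub_of_sub hf ht hs h.ge)

lemma image_starC {W : Type} [DecidableEq W] {f : V → W} {X : Finset (Finset V)}
    {σ : Finset V} (hf : Set.InjOn f ↑(vertexSet X)) (hσ : σ ∈ X) (v : V) :
    (starC X σ v).image (fun s => s.image f)
      = starC (X.image fun s => s.image f) (σ.image f) (f v) := by
  have hfaces : ∀ s ∈ X, s ⊆ vertexSet X := fun s hs => subset_vertexSet hs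
  ext t
  constructor
  · intro ht
    obtain ⟨s, hs, rfl⟩ := Finset.mem_image.1 ht
    rcases mem_starC.1 hs with ⟨h1, h2⟩ | ⟨t₀, h1, h2, rfl⟩
    · apply mem_starC.2
      exact Or.inl ⟨Finset.mem_image_of_mem _ h1,
        fun hEq => h2 (image_inj_sub hf (hfaces s h1) (hfaces σ hσ) hEq)⟩
    · apply mem_starC.2
      refine Or.inr ⟨t₀.image f, Finset.image_subset_image h1, ?_, ?_⟩
      · intro hEq
        exact h2 (image_inj_sub hf (h1.trans (hfaces σ hσ)) (hfaces σ hσ) hEq)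
      · rw [Finset.image_insert]
  · intro ht
    rcases mem_starC.1 ht with ⟨h1, h2⟩ | ⟨t₀, h1, h2, rfl⟩
    · obtain ⟨s, hs, rfl⟩ := Finset.mem_image.1 h1
      exact Finset.mem_image_of_mem _
        (mem_starC.2 (Or.inl ⟨hs, fun hEq => h2 (by rw [hEq])⟩))
    · obtain ⟨t₁, ht₁, rfl⟩ := Finset.subset_image_iff.1 h1
      refine Finset.mem_image.2 ⟨insert v t₁,
        mem_starC.2 (Or.inr ⟨t₁, ht₁, fun hEq => h2 (by rw [hEq]), rfl⟩), ?_⟩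
      rw [Finset.image_insert]

lemma main_aux {W : Type} [DecidableEq W] {d : ℕ} (hd : 2 ≤ d) :
    ∀ (n : ℕ) (X : Finset (Finset V)) (Y : Finset (Finset W)) (f : V → W),
      (vertexSet X).card = n → IsStackedSphere X d → IsStackedSphere Y d →
      Set.BijOn f ↑(vertexSet X) ↑(vertexSet Y) →
      (∀ u ∈ vertexSet X, ∀ v ∈ vertexSet X,
        (edgeGraph X).Adj u v ↔ (edgeGraph Y).Adj (f u) (f v)) →
      Y = X.image fun s => s.image f := by
  intro n
  induction n using Nat.strong_induction_on with
  | _ n ihn =>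
  intro X Y f hn hX hY hf hadj
  have hInj : Set.InjOn f ↑(vertexSet X) := hf.injOn
  have hvY : vertexSet Y = (vertexSet X).image f := by
    apply Finset.coe_injective
    rw [Finset.coe_image]
    exact hf.image_eq.symm
  have hcards : (vertexSet Y).card = (vertexSet X).card := by
    rw [hvY]
    exact Finset.card_image_of_injOn hInj
  obtain ⟨S, hS, hrt⟩ := hX
  rcases hrt.cases_tail with hXS | ⟨X₀, hc, hstep⟩
  · -- base case : X is a standard sphere
    subst hXS
    obtain ⟨A, hA, hXA⟩ := hS
    have hXA' : X = stdS A := hXA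
    subst hXA'
    clear hXA
    have hvX : vertexSet (stdS A) = A := vertexSet_stdS (by omega)
    have hYcard : (vertexSet Y).card = d + 2 := by
      rw [hcards, hvX, hA]
    obtain ⟨B, hB, hYB⟩ := std_of_small hd hY hYcard
    have hYB' : Y = stdS B := hYB
    subst hYB'
    clear hYB
    have hvYB : vertexSet (stdS B) = B := vertexSet_stdS (by omega)
    have hBA : B = A.image f := by
      rw [hvYB, hvX] at hvY
      exact hvY
    rw [hvX] at hInj
    ext t
    constructor
    · intro ht
      have h := mem_stdS.1 ht
      have h1 : t ⊆ A.image f := by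
        rw [← hBA]
        exact h.1
      obtain ⟨s, hsA, rfl⟩ := Finset.subset_image_iff.1 h1
      refine Finset.mem_image.2 ⟨s, mem_stdS.2 ⟨hsA, ?_, ?_⟩, rfl⟩
      · rcases h.2.1 with ⟨y, hy⟩
        obtain ⟨x, hx, _⟩ := Finset.mem_image.1 hy
        exact ⟨x, hx⟩
      · rintro rfl
        exact h.2.2 hBA.symm
    · intro ht
      obtain ⟨s, hs, rfl⟩ := Finset.mem_image.1 ht
      have h := mem_stdS.1 hs
      refine mem_stdS.2 ⟨?_, h.2.1.image f, ?_⟩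
      · rw [hBA]
        exact Finset.image_subset_image h.1
      · intro hEq
        exact h.2.2 (image_inj_sub hInj h.1 (Finset.Subset.refl A) (hEq.trans hBA))
  · -- inductive step
    obtain ⟨σ, v, hσf, hvnew, hXeq⟩ := hstep
    have hXeq' : X = starC X₀ σ v := hXeq
    subst hXeq'
    clear hXeq
    have hX₀st : IsStackedSphere X₀ d := ⟨S, hS, hc⟩
    have hG₀ := good_of_stacked hd hX₀st
    have hσc : σ.card = d + 1 := facet_card hG₀ hσf
    have hσsub : σ ⊆ vertexSet X₀ := subset_vertexSet hσf.1
    have hvX : vertexSet (starC X₀ σ v) = insert v (vertexSet X₀) :=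
      vertexSet_starC hσsub (by omega)
    have hvmem : v ∈ vertexSet (starC X₀ σ v) := by
      rw [hvX]
      exact Finset.mem_insert_self _ _
    have hnbrX : nbr (starC X₀ σ v) v = σ := nbr_starC_new hσsub (by omega) hvnew
    have hwY : f v ∈ vertexSet Y := hf.mapsTo hvmem
    have hnbrY : nbr Y (f v) = σ.image f := by
      ext y
      constructor
      · intro hy
        have hadjY := mem_nbr.1 hy
        have hyY : y ∈ vertexSet Y := nbr_subset hy
        obtain ⟨x, hx, rfl⟩ := hf.surjOn hyY
        have hx' : x ∈ vertexSet (starC X₀ σ v) := hx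
        have h1 : (edgeGraph (starC X₀ σ v)).Adj v x := (hadj v hvmem x hx').2 hadjY
        have h2 : x ∈ σ := by
          rw [← hnbrX]
          exact mem_nbr.2 h1
        exact Finset.mem_image_of_mem f h2
      · intro hy
        obtain ⟨x, hx, rfl⟩ := Finset.mem_image.1 hy
        have hxv : x ∈ vertexSet (starC X₀ σ v) := by
          rw [hvX]
          exact Finset.mem_insert_of_mem (hσsub hx)
        have hadjX : (edgeGraph (starC X₀ σ v)).Adj v x := by
          apply mem_nbr.1
          rw [hnbrX]
          exact hx
        exact mem_nbr.2 ((hadj v hvmem x hxv).1 hadjX)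
    have hσXsub : σ ⊆ vertexSet (starC X₀ σ v) := by
      rw [hvX]
      exact hσsub.trans (Finset.subset_insert _ _)
    have hσfc : (σ.image f).card = d + 1 := by
      rw [Finset.card_image_of_injOn (hInj.mono (Finset.coe_subset.2 hσXsub)), hσc]
    have hbig : d + 2 < (vertexSet Y).card := by
      rw [hcards, hvX, Finset.card_insert_of_notMem hvnew]
      have := hG₀.2.2.2.1
      omega
    obtain ⟨T, hT, hrtY⟩ := hY
    obtain ⟨Y₀, hY₀st, hmemY₀, hwnew, hYeq⟩ :=
      unstar hd hT hrtY (f v) hwY (by rw [hnbrY]; exact hσfc) hbig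
    rw [hnbrY] at hYeq hmemY₀
    have hσfsub : σ.image f ⊆ vertexSet Y₀ := subset_vertexSet hmemY₀
    have hvYeq : vertexSet Y = insert (f v) (vertexSet Y₀) := by
      rw [hYeq]
      exact vertexSet_starC hσfsub (by omega)
    have hmapsto : ∀ x ∈ vertexSet X₀, f x ∈ vertexSet Y₀ := by
      intro x hx
      have hxX : x ∈ vertexSet (starC X₀ σ v) := by
        rw [hvX]
        exact Finset.mem_insert_of_mem hx
      have h1 : f x ∈ vertexSet Y := hf.mapsTo hxX
      rw [hvYeq] at h1
      rcases Finset.mem_insert.1 h1 with h | h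
      · exfalso
        have : x = v := hInj hxX hvmem h
        exact hvnew (this ▸ hx)
      · exact h
    have hsubcoe : (↑(vertexSet X₀) : Set V) ⊆ ↑(vertexSet (starC X₀ σ v)) := by
      intro x hx
      have : x ∈ vertexSet X₀ := hx
      have : x ∈ vertexSet (starC X₀ σ v) := by
        rw [hvX]
        exact Finset.mem_insert_of_mem this
      exact this
    have hf₀ : Set.BijOn f ↑(vertexSet X₀) ↑(vertexSet Y₀) := by
      refine ⟨fun x hx => hmapsto x hx, hInj.mono hsubcoe, ?_⟩
      intro y hy
      have hyY₀ : y ∈ vertexSet Y₀ := hy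
      have hyY : y ∈ vertexSet Y := by
        rw [hvYeq]
        exact Finset.mem_insert_of_mem hyY₀
      obtain ⟨x, hx, rfl⟩ := hf.surjOn hyY
      have hxX : x ∈ vertexSet (starC X₀ σ v) := hx
      have hxv : x ≠ v := by
        rintro rfl
        exact hwnew hyY₀
      have hxX₀ : x ∈ vertexSet X₀ := by
        rw [hvX] at hxX
        rcases Finset.mem_insert.1 hxX with h | h
        · exact absurd h hxv
        · exact h
      exact ⟨x, hxX₀, rfl⟩
    have hadj₀ : ∀ a ∈ vertexSet X₀, ∀ b ∈ vertexSet X₀,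
        (edgeGraph X₀).Adj a b ↔ (edgeGraph Y₀).Adj (f a) (f b) := by
      intro a ha b hb
      have haX : a ∈ vertexSet (starC X₀ σ v) := by
        rw [hvX]; exact Finset.mem_insert_of_mem ha
      have hbX : b ∈ vertexSet (starC X₀ σ v) := by
        rw [hvX]; exact Finset.mem_insert_of_mem hb
      have hvab : v ∉ ({a, b} : Finset V) := by
        simp only [Finset.mem_insert, Finset.mem_singleton]
        rintro (rfl | rfl)
        · exact hvnew ha
        · exact hvnew hb
      have e1 : (edgeGraph X₀).Adj a b ↔ (edgeGraph (starC X₀ σ v)).Adj a b := by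
        rw [adj_iff, adj_iff, edge_starC_old (show 3 ≤ σ.card by omega) hvab hvnew]
      have e2 : (edgeGraph Y₀).Adj (f a) (f b) ↔ (edgeGraph Y).Adj (f a) (f b) := by
        have hwab : f v ∉ ({f a, f b} : Finset W) := by
          simp only [Finset.mem_insert, Finset.mem_singleton]
          rintro (h | h)
          · have : v = a := hInj hvmem haX h
            exact hvnew (this ▸ ha)
          · have : v = b := hInj hvmem hbX h
            exact hvnew (this ▸ hb)
        rw [hYeq, adj_iff, adj_iff,
          edge_starC_old (show 3 ≤ (σ.image f).card by omega) hwab hwnew]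
      exact e1.trans ((hadj a haX b hbX).trans e2.symm)
    have hn₀ : (vertexSet X₀).card < n := by
      rw [← hn, hvX, Finset.card_insert_of_notMem hvnew]
      omega
    have hY₀eq : Y₀ = X₀.image (fun s => s.image f) :=
      ihn _ hn₀ X₀ Y₀ f rfl hX₀st hY₀st hf₀ hadj₀
    rw [hYeq, hY₀eq]
    exact (image_starC (hInj.mono hsubcoe) hσf.1 v).symm


/-- A stacked `d`-sphere (`d ≥ 2`) is determined by its edge graph: if there is a graph
isomorphism between the edge graphs of two stacked `d`-spheres then the complexes are
isomorphic. -/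
theorem stmt11 {V W : Type} [DecidableEq V] [DecidableEq W] (d : ℕ) (hd : 2 ≤ d)
    (X : Finset (Finset V)) (Y : Finset (Finset W))
    (hX : IsStackedSphere X d) (hY : IsStackedSphere Y d)
    (f : V → W) (hf : Set.BijOn f ↑(vertexSet X) ↑(vertexSet Y))
    (hadj : ∀ u ∈ vertexSet X, ∀ v ∈ vertexSet X,
      (edgeGraph X).Adj u v ↔ (edgeGraph Y).Adj (f u) (f v)) :
    CplxIso X Y :=
  ⟨f, hf.injOn, main_aux hd _ X Y f rfl hX hY hf hadj⟩

end
end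

section
/- Let $d \geq 2$ and $m \geq 1$. A vertex $x \in B_m$ and a vertex $y \in A_m$ are at distance at least $3$ in the edge graph of $\partial N^{d+1}_{m+d+1}$ if and only if $x - y \geq 2d+3$. Consequently, a bijection $\psi: B_m \to A_m$ is admissible if and only if $x - \psi(x) \geq 2d+3$ for all $x \in B_m$; in particular, no admissible bijection $\psi: B_m \to A_m$ exists when $m \leq 2d+2$, and when $m = 2d+3$ the map $\psi_0$ given by $\psi_0(m+i) = i$ ($1 \leq i \leq d+1$) is the unique admissible bijection from $B_m$ to $A_m$. -/
open Finset

noncomputable section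

attribute [local instance] Classical.propDecidable

variable {V : Type} [DecidableEq V]

lemma mem_boundaryN' {d m : ℕ} {t : Finset ℕ} :
    t ∈ boundaryN d m ↔ t.Nonempty ∧ ∃ s ∈ boundaryNFacets d m, t ⊆ s := by
  simp only [boundaryN, Finset.mem_filter, Finset.mem_biUnion, Finset.mem_powerset]
  tauto

lemma facet_card' {d m : ℕ} {s : Finset ℕ} (hs : s ∈ boundaryNFacets d m) :
    s.card = d + 1 := by
  simp only [boundaryNFacets, Finset.mem_filter] at hs
  exact hs.2.1

lemma facet_window {d m : ℕ} {s : Finset ℕ} (hs : s ∈ boundaryNFacets d m) :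
    ∃ k, 1 ≤ k ∧ k ≤ m ∧ s ⊆ Finset.Icc k (k + d + 1) := by
  simp only [boundaryNFacets, Finset.mem_filter] at hs
  rcases Finset.card_eq_one.mp hs.2.2 with ⟨k, hk⟩
  have hmem : k ∈ (Finset.Icc 1 m).filter fun k => s ⊆ Finset.Icc k (k + d + 1) := by
    rw [hk]; exact Finset.mem_singleton_self k
  rw [Finset.mem_filter, Finset.mem_Icc] at hmem
  exact ⟨k, hmem.1.1, hmem.1.2, hmem.2⟩

lemma face_window {d m : ℕ} {t : Finset ℕ} (ht : t ∈ boundaryN d m) :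
    ∃ k, 1 ≤ k ∧ k ≤ m ∧ t ⊆ Finset.Icc k (k + d + 1) := by
  rcases mem_boundaryN'.mp ht with ⟨-, s, hs, hts⟩
  rcases facet_window hs with ⟨k, h1, h2, h3⟩
  exact ⟨k, h1, h2, hts.trans h3⟩

lemma mem_facets_of {d m k : ℕ} {s : Finset ℕ} (hk1 : 1 ≤ k) (hkm : k ≤ m)
    (hs : s ⊆ Finset.Icc k (k + d + 1)) (hcard : s.card = d + 1)
    (huniq : ∀ k', 1 ≤ k' → k' ≤ m → s ⊆ Finset.Icc k' (k' + d + 1) → k' = k) :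
    s ∈ boundaryNFacets d m := by
  simp only [boundaryNFacets, Finset.mem_filter, Finset.mem_powerset]
  refine ⟨fun x hx => ?_, hcard, ?_⟩
  · have hx2 := hs hx
    rw [Finset.mem_Icc] at hx2 ⊢
    omega
  · rw [Finset.card_eq_one]
    refine ⟨k, ?_⟩
    ext k'
    simp only [Finset.mem_filter, Finset.mem_Icc, Finset.mem_singleton]
    constructor
    · rintro ⟨⟨h1, h2⟩, h3⟩
      exact huniq k' h1 h2 h3
    · rintro rfl
      exact ⟨⟨hk1, hkm⟩, hs⟩

lemma pair_mem {d m a b : ℕ} (hd : 2 ≤ d) (hm : 1 ≤ m)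
    (ha : 1 ≤ a) (hab : a ≤ b) (hb : b ≤ m + d + 1) (hgap : b ≤ a + d + 1) :
    ({a, b} : Finset ℕ) ∈ boundaryN d m := by
  set k := max 1 (b - (d + 1)) with hkdef
  have hk1 : 1 ≤ k := le_max_left _ _
  have hkm : k ≤ m := by omega
  have hka : k ≤ a := by omega
  have hbk : b ≤ k + d + 1 := by omega
  have hW : (Finset.Icc k (k + d + 1)).card = d + 2 := by
    rw [Nat.card_Icc]; omega
  have hne : ((Finset.Icc k (k + d + 1)) \ {k, a, b}).Nonempty := by
    rw [← Finset.card_pos]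
    have h1 : ({k, a, b} : Finset ℕ).card ≤ 3 := by
      apply le_trans (Finset.card_insert_le _ _)
      have := Finset.card_insert_le a ({b} : Finset ℕ)
      simp at this ⊢
      omega
    have h2 := Finset.le_card_sdiff ({k, a, b} : Finset ℕ) (Finset.Icc k (k + d + 1))
    omega
  obtain ⟨e, he⟩ := hne
  rw [Finset.mem_sdiff] at he
  have hek : e ≠ k := fun h => he.2 (by simp [h])
  have hea : e ≠ a := fun h => he.2 (by simp [h])
  have heb : e ≠ b := fun h => he.2 (by simp [h])
  set s := (Finset.Icc k (k + d + 1)).erase e with hsdef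
  have hsub : s ⊆ Finset.Icc k (k + d + 1) := Finset.erase_subset _ _
  have hscard : s.card = d + 1 := by
    rw [hsdef, Finset.card_erase_of_mem he.1, hW]
    omega
  have hks : k ∈ s :=
    Finset.mem_erase.mpr ⟨Ne.symm hek, Finset.mem_Icc.mpr ⟨le_rfl, by omega⟩⟩
  have has : a ∈ s :=
    Finset.mem_erase.mpr ⟨fun h => hea h.symm, Finset.mem_Icc.mpr ⟨hka, by omega⟩⟩
  have hbs : b ∈ s :=
    Finset.mem_erase.mpr ⟨fun h => heb h.symm, Finset.mem_Icc.mpr ⟨by omega, hbk⟩⟩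
  have hfac : s ∈ boundaryNFacets d m := by
    apply mem_facets_of hk1 hkm hsub hscard
    intro k' h1 h2 h3
    have hk's := Finset.mem_Icc.mp (h3 hks)
    have hbs' := Finset.mem_Icc.mp (h3 hbs)
    omega
  exact mem_boundaryN'.mpr ⟨⟨a, Finset.mem_insert_self a _⟩, s, hfac, by
    rw [Finset.insert_subset_iff, Finset.singleton_subset_iff]
    exact ⟨has, hbs⟩⟩

lemma A_mem_facets {d m : ℕ} (hm : 1 ≤ m) :
    Finset.Icc 1 (d + 1) ∈ boundaryNFacets d m := by
  apply mem_facets_of (k := 1) le_rfl hm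
  · intro x hx; rw [Finset.mem_Icc] at hx ⊢; omega
  · rw [Nat.card_Icc]
    omega
  · intro k' h1 h2 h3
    have := Finset.mem_Icc.mp (h3 (Finset.mem_Icc.mpr ⟨le_rfl, by omega⟩))
    omega

lemma B_mem_facets {d m : ℕ} (hm : 1 ≤ m) :
    Finset.Icc (m + 1) (m + d + 1) ∈ boundaryNFacets d m := by
  apply mem_facets_of (k := m) hm le_rfl
  · intro x hx; rw [Finset.mem_Icc] at hx ⊢; omega
  · rw [Nat.card_Icc]; omega
  · intro k' h1 h2 h3
    have := Finset.mem_Icc.mp (h3 (Finset.mem_Icc.mpr ⟨by omega, le_rfl⟩))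
    omega

lemma isFacet_of_mem_facets {d m : ℕ} {s : Finset ℕ} (hs : s ∈ boundaryNFacets d m) :
    IsFacet (boundaryN d m) s := by
  have hcard := facet_card' hs
  have hmem : s ∈ boundaryN d m :=
    mem_boundaryN'.mpr ⟨Finset.card_pos.mp (by omega), s, hs, Finset.Subset.refl s⟩
  refine ⟨hmem, fun t ht hst => ?_⟩
  rcases mem_boundaryN'.mp ht with ⟨-, s', hs', hts'⟩
  have hcard' := facet_card' hs'
  have heq : s = s' := Finset.eq_of_subset_of_card_le (hst.trans hts') (by omega)
  exact Finset.Subset.antisymm hst (heq ▸ hts')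

lemma farApart_iff' {d m x y : ℕ} (hd : 2 ≤ d) (hm : 1 ≤ m)
    (hx1 : m + 1 ≤ x) (hx2 : x ≤ m + d + 1) (hy1 : 1 ≤ y) (hy2 : y ≤ d + 1) :
    farApart (edgeGraph (boundaryN d m)) x y ↔ 2 * d + 3 ≤ x - y := by
  constructor
  · rintro ⟨hne, hnadj, hz⟩
    by_contra hcon
    by_cases hcase : y + d + 2 ≤ x
    · have hx3 : x ≤ y + 2 * d + 2 := by omega
      apply hz (y + d + 1)
      constructor
      · refine ⟨by omega, ?_⟩
        have hp : ({y + d + 1, x} : Finset ℕ) ∈ boundaryN d m :=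
          pair_mem hd hm (by omega) (by omega) (by omega) (by omega)
        rwa [Finset.pair_comm] at hp
      · refine ⟨by omega, ?_⟩
        have hp : ({y, y + d + 1} : Finset ℕ) ∈ boundaryN d m :=
          pair_mem hd hm hy1 (by omega) (by omega) (by omega)
        rwa [Finset.pair_comm] at hp
    · apply hnadj
      refine ⟨hne, ?_⟩
      by_cases hxy : x ≤ y
      · exact pair_mem hd hm (by omega) hxy (by omega) (by omega)
      · have hp := pair_mem (a := y) (b := x) hd hm hy1 (by omega) (by omega) (by omega)
        rwa [Finset.pair_comm] at hp
  · intro h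
    have hxy : y + 2 * d + 3 ≤ x := by omega
    refine ⟨by omega, ?_, ?_⟩
    · rintro ⟨-, hmem⟩
      rcases face_window hmem with ⟨k, -, -, hsub⟩
      have h1 := Finset.mem_Icc.mp (hsub (Finset.mem_insert_self x _))
      have h2 := Finset.mem_Icc.mp
        (hsub (Finset.mem_insert_of_mem (Finset.mem_singleton_self y)))
      omega
    · rintro z ⟨⟨-, h1⟩, -, h2⟩
      rcases face_window h1 with ⟨k, -, -, hs1⟩
      rcases face_window h2 with ⟨k', -, -, hs2⟩
      have a1 := Finset.mem_Icc.mp (hs1 (Finset.mem_insert_self x _))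
      have a2 := Finset.mem_Icc.mp
        (hs1 (Finset.mem_insert_of_mem (Finset.mem_singleton_self z)))
      have a3 := Finset.mem_Icc.mp (hs2 (Finset.mem_insert_self z _))
      have a4 := Finset.mem_Icc.mp
        (hs2 (Finset.mem_insert_of_mem (Finset.mem_singleton_self y)))
      omega

/-- For `d ≥ 2`, `m ≥ 1`: a vertex `x ∈ B_m` and a vertex `y ∈ A_m` are at distance at
least 3 in the edge graph of `∂N^{d+1}_{m+d+1}` iff `x - y ≥ 2d+3`; a bijection
`ψ : B_m → A_m` is admissible iff `x - ψ x ≥ 2d+3` for all `x ∈ B_m`; in particular no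
admissible bijection exists when `m ≤ 2d+2`, and for `m = 2d+3` the map `x ↦ x - m` is
the unique admissible bijection from `B_m` to `A_m`. -/
theorem stmt19 (d m : ℕ) (hd : 2 ≤ d) (hm : 1 ≤ m) :
    (∀ x ∈ Finset.Icc (m + 1) (m + d + 1), ∀ y ∈ Finset.Icc 1 (d + 1),
      (farApart (edgeGraph (boundaryN d m)) x y ↔ 2 * d + 3 ≤ x - y)) ∧
    (∀ ψ : ℕ → ℕ,
      Set.BijOn ψ ↑(Finset.Icc (m + 1) (m + d + 1)) ↑(Finset.Icc 1 (d + 1)) →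
      (Admissible (boundaryN d m) (Finset.Icc (m + 1) (m + d + 1))
          (Finset.Icc 1 (d + 1)) ψ ↔
        ∀ x ∈ Finset.Icc (m + 1) (m + d + 1), 2 * d + 3 ≤ x - ψ x)) ∧
    (m ≤ 2 * d + 2 → ∀ ψ : ℕ → ℕ,
      ¬ Admissible (boundaryN d m) (Finset.Icc (m + 1) (m + d + 1))
          (Finset.Icc 1 (d + 1)) ψ) ∧
    (m = 2 * d + 3 →
      Admissible (boundaryN d m) (Finset.Icc (m + 1) (m + d + 1))
        (Finset.Icc 1 (d + 1)) (fun x => x - m) ∧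
      ∀ ψ : ℕ → ℕ,
        Admissible (boundaryN d m) (Finset.Icc (m + 1) (m + d + 1))
          (Finset.Icc 1 (d + 1)) ψ →
        ∀ x ∈ Finset.Icc (m + 1) (m + d + 1), ψ x = x - m) := by
  have part1 : ∀ x ∈ Finset.Icc (m + 1) (m + d + 1), ∀ y ∈ Finset.Icc 1 (d + 1),
      (farApart (edgeGraph (boundaryN d m)) x y ↔ 2 * d + 3 ≤ x - y) := by
    intro x hx y hy
    rw [Finset.mem_Icc] at hx hy
    exact farApart_iff' hd hm hx.1 hx.2 hy.1 hy.2
  have part2 : ∀ ψ : ℕ → ℕ,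
      Set.BijOn ψ ↑(Finset.Icc (m + 1) (m + d + 1)) ↑(Finset.Icc 1 (d + 1)) →
      (Admissible (boundaryN d m) (Finset.Icc (m + 1) (m + d + 1))
          (Finset.Icc 1 (d + 1)) ψ ↔
        ∀ x ∈ Finset.Icc (m + 1) (m + d + 1), 2 * d + 3 ≤ x - ψ x) := by
    intro ψ hbij
    have hψmem : ∀ x ∈ Finset.Icc (m + 1) (m + d + 1),
        ψ x ∈ Finset.Icc 1 (d + 1) := by
      intro x hx
      exact Finset.mem_coe.mp (hbij.mapsTo (Finset.mem_coe.mpr hx))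
    constructor
    · intro hadm x hx
      exact (part1 x hx (ψ x) (hψmem x hx)).mp (hadm.2.2.2.2 x hx)
    · intro h
      have hkey : 2 * d + 3 ≤ m := by
        have hx : m + 1 ∈ Finset.Icc (m + 1) (m + d + 1) :=
          Finset.mem_Icc.mpr ⟨le_rfl, by omega⟩
        have h1 := h (m + 1) hx
        have h2 := Finset.mem_Icc.mp (hψmem (m + 1) hx)
        omega
      refine ⟨isFacet_of_mem_facets (B_mem_facets hm),
        isFacet_of_mem_facets (A_mem_facets hm), ?_, hbij, ?_⟩
      · rw [Finset.disjoint_left]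
        intro a ha hb
        rw [Finset.mem_Icc] at ha hb
        omega
      · intro x hx
        exact (part1 x hx (ψ x) (hψmem x hx)).mpr (h x hx)
  refine ⟨part1, part2, ?_, ?_⟩
  · intro hm' ψ hadm
    have hbij := hadm.2.2.2.1
    have hx : m + 1 ∈ Finset.Icc (m + 1) (m + d + 1) :=
      Finset.mem_Icc.mpr ⟨le_rfl, by omega⟩
    have h1 := (part2 ψ hbij).mp hadm (m + 1) hx
    have h2 : ψ (m + 1) ∈ Finset.Icc 1 (d + 1) :=
      Finset.mem_coe.mp (hbij.mapsTo (Finset.mem_coe.mpr hx))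
    rw [Finset.mem_Icc] at h2
    omega
  · intro hm'
    have hbij0 : Set.BijOn (fun x => x - m)
        ↑(Finset.Icc (m + 1) (m + d + 1)) ↑(Finset.Icc 1 (d + 1)) := by
      refine ⟨?_, ?_, ?_⟩
      · intro x hx
        simp only [Finset.coe_Icc, Set.mem_Icc] at hx ⊢
        omega
      · intro a ha b hb hab
        simp only [Finset.coe_Icc, Set.mem_Icc] at ha hb
        simp only at hab
        omega
      · intro y hy
        simp only [Finset.coe_Icc, Set.mem_Icc] at hy
        exact ⟨y + m, by simp only [Finset.coe_Icc, Set.mem_Icc]; omega, by show y + m - m = y; omega⟩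
    have hadm0 : Admissible (boundaryN d m) (Finset.Icc (m + 1) (m + d + 1))
        (Finset.Icc 1 (d + 1)) (fun x => x - m) := by
      rw [part2 _ hbij0]
      intro x hx
      rw [Finset.mem_Icc] at hx
      show 2 * d + 3 ≤ x - (x - m)
      omega
    refine ⟨hadm0, ?_⟩
    intro ψ hadm
    have hbij := hadm.2.2.2.1
    have hψmem : ∀ x ∈ Finset.Icc (m + 1) (m + d + 1),
        ψ x ∈ Finset.Icc 1 (d + 1) := by
      intro x hx
      exact Finset.mem_coe.mp (hbij.mapsTo (Finset.mem_coe.mpr hx))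
    have hge := (part2 ψ hbij).mp hadm
    have key : ∀ x, m + 1 ≤ x → x ≤ m + d + 1 → ψ x = x - m := by
      intro x
      induction x using Nat.strong_induction_on with
      | _ x ih =>
        intro h1 h2
        have hxB : x ∈ Finset.Icc (m + 1) (m + d + 1) := Finset.mem_Icc.mpr ⟨h1, h2⟩
        have hψx := Finset.mem_Icc.mp (hψmem x hxB)
        have h3 := hge x hxB
        by_contra hne
        have hlt : ψ x + m < x := by omega
        have hx'B : ψ x + m ∈ Finset.Icc (m + 1) (m + d + 1) :=
          Finset.mem_Icc.mpr ⟨by omega, by omega⟩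
        have hih : ψ (ψ x + m) = ψ x + m - m :=
          ih (ψ x + m) hlt (by omega) (by omega)
        have heq : ψ (ψ x + m) = ψ x := by omega
        have := hbij.injOn (Finset.mem_coe.mpr hx'B) (Finset.mem_coe.mpr hxB) heq
        omega
    intro x hx
    rw [Finset.mem_Icc] at hx
    exact key x hx.1 hx.2

end
end
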